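/- Let 0 < q < 1/2 and let f be a solution of Schilling's problem such that f(x) = 0 for all |x| ≤ 1 - Q. Then f(x) = 0 for all x with q·Q ≤ |x| ≤ q·(2-Q), where Q = q/(1-q). -/

import Mathlib

set_option maxHeartbeats 1000000 in
theorem schilling_step10 (q : ℝ) (hq : (3 - Real.sqrt 5) / 2 < q)
    (hq1 : q ≤ (1 - (2 : ℝ) ^ ((1 : ℝ) / 3) + (4 : ℝ) ^ ((1 : ℝ) / 3)) / 3)
    (f : ℝ → ℝ)
    (heq : ∀ x : ℝ, f (q * x) = 1 / (4 * q) * (f (x - 1) + f (x + 1) + 2 * f x))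
    (hQ : ∀ x : ℝ, |x| > q / (1 - q) → f x = 0)
    (h0 : ∀ x : ℝ, |x| ≤ 1 - q / (1 - q) → f x = 0) :
    ∀ x : ℝ, q * (q / (1 - q)) ≤ |x| → |x| ≤ q * (2 - q / (1 - q)) → f x = 0 := by
  -- numeric bounds on q
  have hs : Real.sqrt 5 < 2.24 := by
    rw [show (2.24:ℝ) = Real.sqrt (2.24^2) by rw [Real.sqrt_sq]; norm_num]
    exact Real.sqrt_lt_sqrt (by norm_num) (by norm_num)
  have hqlo : (0.38:ℝ) < q := by linarith
  have hc2 : (1.25:ℝ) ≤ (2:ℝ)^((1:ℝ)/3) := by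
    have hnn : (0:ℝ) ≤ (2:ℝ)^((1:ℝ)/3) := Real.rpow_nonneg (by norm_num) _
    refine le_of_pow_le_pow_left₀ (n := 3) (by norm_num) hnn ?_
    have h3 : ((2:ℝ)^((1:ℝ)/3))^(3:ℕ) = 2 := by
      rw [← Real.rpow_natCast ((2:ℝ)^((1:ℝ)/3)) 3, ← Real.rpow_mul (by norm_num)]
      norm_num
    rw [h3]; norm_num
  have hc4 : (4:ℝ)^((1:ℝ)/3) ≤ 1.59 := by
    refine le_of_pow_le_pow_left₀ (n := 3) (by norm_num) (by norm_num) ?_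
    have h3 : ((4:ℝ)^((1:ℝ)/3))^(3:ℕ) = 4 := by
      rw [← Real.rpow_natCast ((4:ℝ)^((1:ℝ)/3)) 3, ← Real.rpow_mul (by norm_num)]
      norm_num
    rw [h3]; norm_num
  have hqhi : q ≤ 0.45 := by linarith
  have hq0 : (0:ℝ) < q := by linarith
  have h1q : (0:ℝ) < 1 - q := by linarith
  have hQ1 : q / (1 - q) < 1 := (div_lt_one h1q).mpr (by linarith)
  have hQpos : 0 < q / (1 - q) := div_pos hq0 h1q
  -- boundary values: f(±Q) = 0
  have fQ : f (q / (1 - q)) = 0 := by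
    have e := heq (1/(1-q))
    have k1 : q * (1/(1-q)) = q/(1-q) := by field_simp
    have k2 : 1/(1-q) - 1 = q/(1-q) := by field_simp; ring
    have z1 : f (1/(1-q) + 1) = 0 := by
      apply hQ; rw [abs_of_pos (by positivity)]
      have : (1:ℝ) ≤ 1/(1-q) := by rw [le_div_iff₀ h1q]; linarith
      linarith
    have z2 : f (1/(1-q)) = 0 := by
      apply hQ; rw [abs_of_pos (by positivity)]
      rw [gt_iff_lt, div_lt_div_iff₀ h1q h1q]; nlinarith
    rw [k1, k2, z1, z2] at e
    have e' : f (q/(1-q)) * (4*q - 1) = 0 := by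
      field_simp at e; linarith
    rcases mul_eq_zero.mp e' with h | h
    · exact h
    · exfalso; linarith
  have fQ' : f (-(q / (1 - q))) = 0 := by
    have e := heq (-(1/(1-q)))
    have k1 : q * (-(1/(1-q))) = -(q/(1-q)) := by field_simp
    have k2 : -(1/(1-q)) + 1 = -(q/(1-q)) := by field_simp; ring_nf
    have z1 : f (-(1/(1-q)) - 1) = 0 := by
      apply hQ
      rw [show -(1/(1-q)) - 1 = -(1/(1-q) + 1) by ring, abs_neg,
        abs_of_pos (by positivity)]
      have : (1:ℝ) ≤ 1/(1-q) := by rw [le_div_iff₀ h1q]; linarith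
      linarith
    have z2 : f (-(1/(1-q))) = 0 := by
      apply hQ; rw [abs_neg, abs_of_pos (by positivity)]
      rw [gt_iff_lt, div_lt_div_iff₀ h1q h1q]; nlinarith
    rw [k1, k2, z1, z2] at e
    have e' : f (-(q/(1-q))) * (4*q - 1) = 0 := by
      rw [show -(q/(1-q)) = -q/(1-q) by ring]
      field_simp at e; rw [neg_div]; linarith
    rcases mul_eq_zero.mp e' with h | h
    · exact h
    · exfalso; linarith
  -- f vanishes for |y| ≥ Q
  have hQ' : ∀ y : ℝ, q/(1-q) ≤ |y| → f y = 0 := by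
    intro y hy
    rcases eq_or_lt_of_le hy with h | h
    · rcases abs_cases y with ⟨h1, _⟩ | ⟨h1, _⟩
      · rw [← h.trans h1]; exact fQ
      · have h2 : y = -(q/(1-q)) := by have := h.trans h1; linarith
        rw [h2]; exact fQ'
    · exact hQ y h
  -- main argument
  intro x hx1 hx2
  have key : q * (x/q) = x := by field_simp
  have e := heq (x/q)
  rw [key] at e
  set y := x/q with hy
  have habs : |y| = |x|/q := by rw [hy, abs_div, abs_of_pos hq0]
  have hb1 : q/(1-q) ≤ |y| := by
    rw [habs, le_div_iff₀ hq0]; linarith [hx1]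
  have hb2 : |y| ≤ 2 - q/(1-q) := by
    rw [habs, div_le_iff₀ hq0]; linarith [hx2]
  have fy : f y = 0 := hQ' y hb1
  rcases le_total 0 y with hsgn | hsgn
  · rw [abs_of_nonneg hsgn] at hb1 hb2
    have fy1 : f (y + 1) = 0 := by
      apply hQ; rw [abs_of_pos (by linarith)]; linarith
    have fy2 : f (y - 1) = 0 := by
      apply h0; rw [abs_le]; constructor <;> linarith
    rw [fy, fy1, fy2] at e
    rw [e]; ring
  · rw [abs_of_nonpos hsgn] at hb1 hb2
    have fy1 : f (y - 1) = 0 := by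
      apply hQ
      rw [show y - 1 = -(1 - y) by ring, abs_neg, abs_of_pos (by linarith)]
      linarith
    have fy2 : f (y + 1) = 0 := by
      apply h0; rw [abs_le]; constructor <;> linarith
    rw [fy, fy1, fy2] at e
    rw [e]; ring
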